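/- (Integral Cauchy–Binet / Andréief identity.) Let S ⊆ ℝ be a measurable set, n ≥ 1, and let f_0, …, f_{n−1}, g_0, …, g_{n−1} : ℝ → ℝ be measurable functions such that each product f_r · g_c is integrable on S. Let A be the n×n matrix with entries A_{r,c} = ∫_S f_r(x) g_c(x) dx. Then det(A) = ∫_{x_0 > x_1 > ⋯ > x_{n−1}, x ∈ S^n} det(B(x)) · det(C(x)) dx, where for x = (x_0,…,x_{n−1}), B(x) is the n×n matrix with entries B(x)_{r,i} = f_r(x_i) and C(x) is the n×n matrix with entries C(x)_{i,c} = g_c(x_i). -/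

import Mathlib

open MeasureTheory Finset

section aux

/-- Product of integrable functions of separate coordinates is integrable w.r.t. a pi measure. -/
theorem aux_integrable_prod {n : ℕ} (μ : Measure ℝ) [SigmaFinite μ]
    {f : Fin n → ℝ → ℝ} (hf : ∀ i, Integrable (f i) μ) :
    Integrable (fun x : Fin n → ℝ => ∏ i, f i (x i)) (Measure.pi fun _ => μ) := by
  induction n with
  | zero =>
      simp only [Finset.univ_eq_empty, Finset.prod_empty]
      rw [integrable_const_iff]
      right
      exact ⟨by rw [Measure.pi_empty_univ]; exact ENNReal.one_lt_top⟩
  | succ n n_ih =>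
      have h := ((measurePreserving_piFinSuccAbove (fun _ : Fin (n + 1) => μ) 0).symm)
      rw [← h.integrable_comp_emb (MeasurableEquiv.measurableEmbedding _)]
      simp_rw [MeasurableEquiv.piFinSuccAbove_symm_apply, Fin.prod_univ_succ]
      simp only [Fin.insertNthEquiv, Equiv.coe_fn_mk, Fin.insertNth_zero,
        Function.comp_def, Fin.cons_zero, Fin.cons_succ, Fin.zero_succAbove]
      exact Integrable.mul_prod (hf 0) (n_ih (fun i => hf _))

/-- Fubini for products of functions of separate coordinates, pi measure version. -/
theorem aux_integral_prod {n : ℕ} (μ : Measure ℝ) [SigmaFinite μ] (f : Fin n → ℝ → ℝ) :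
    ∫ x : Fin n → ℝ, ∏ i, f i (x i) ∂(Measure.pi fun _ => μ) = ∏ i, ∫ x, f i x ∂μ := by
  induction n with
  | zero =>
      simp only [Finset.univ_eq_empty, Finset.prod_empty, integral_const,
        measureReal_def, Measure.pi_empty_univ, ENNReal.toReal_one, smul_eq_mul, mul_one, one_smul]
  | succ n n_ih =>
      calc
        _ = ∫ p : ℝ × (Fin n → ℝ),
            f 0 p.1 * ∏ i : Fin n, f (Fin.succ i) (p.2 i)
              ∂(μ.prod (Measure.pi fun _ : Fin n => μ)) := by
          rw [← ((measurePreserving_piFinSuccAbove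
            (fun _ : Fin (n + 1) => μ) 0).symm).integral_comp']
          simp_rw [MeasurableEquiv.piFinSuccAbove_symm_apply, Fin.prod_univ_succ]
          simp [Fin.insertNthEquiv, Fin.insertNth_zero]
        _ = (∫ x, f 0 x ∂μ) * ∏ i : Fin n, ∫ x, f (Fin.succ i) x ∂μ := by
          rw [← n_ih, ← integral_prod_mul]
        _ = ∏ i, ∫ x, f i x ∂μ := by rw [Fin.prod_univ_succ]

/-- The "diagonal" `{x | x i = x j}` is null for a pi measure with atomless factors. -/
theorem aux_diag_null {n : ℕ} (μ : Measure ℝ) [SigmaFinite μ] [NullSingletonClass μ]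
    {i j : Fin n} (hij : i ≠ j) :
    Measure.pi (fun _ : Fin n => μ) {x | x i = x j} = 0 := by
  cases n with
  | zero => exact i.elim0
  | succ n =>
      obtain ⟨k, hk⟩ := Fin.exists_succAbove_eq (Ne.symm hij)
      have hmp := measurePreserving_piFinSuccAbove (fun _ : Fin (n + 1) => μ) i
      set e := MeasurableEquiv.piFinSuccAbove (fun _ : Fin (n + 1) => ℝ) i with he
      have hmeas : MeasurableSet {p : ℝ × (Fin n → ℝ) | p.1 = p.2 k} :=
        measurableSet_eq_fun measurable_fst ((measurable_pi_apply k).comp measurable_snd)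
      have hset : {x : Fin (n + 1) → ℝ | x i = x j}
          = e ⁻¹' {p : ℝ × (Fin n → ℝ) | p.1 = p.2 k} := by
        ext x
        simp only [Set.mem_setOf_eq, Set.mem_preimage, he,
          MeasurableEquiv.piFinSuccAbove_apply]
        rw [← hk]
        rfl
      rw [hset, hmp.measure_preimage hmeas.nullMeasurableSet,
        Measure.measure_prod_null hmeas]
      refine Filter.Eventually.of_forall fun a => ?_
      show (Measure.pi fun _ : Fin n => μ)
        (Prod.mk a ⁻¹' {p : ℝ × (Fin n → ℝ) | p.1 = p.2 k}) = 0
      have : (Prod.mk a ⁻¹' {p : ℝ × (Fin n → ℝ) | p.1 = p.2 k})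
          = {y : Fin n → ℝ | y k = a} := by
        ext y; simp [eq_comm]
      rw [this]
      exact Measure.pi_hyperplane (fun _ : Fin n => μ) k a

/-- The pi measure of restrictions is the restriction of the pi measure. -/
theorem aux_pi_restrict (S : Set ℝ) (hS : MeasurableSet S) (n : ℕ) :
    (Measure.pi fun _ : Fin n => (volume : Measure ℝ).restrict S)
      = (volume : Measure (Fin n → ℝ)).restrict (Set.univ.pi fun _ => S) := by
  refine Measure.pi_eq fun s hs => ?_
  rw [Measure.restrict_apply (MeasurableSet.univ_pi hs), ← Set.pi_inter_distrib,
    volume_pi_pi]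
  exact Finset.prod_congr rfl fun i _ => (Measure.restrict_apply (hs i)).symm

/-- Every injective tuple can be sorted strictly decreasingly by a permutation. -/
theorem aux_exists_sort {n : ℕ} {x : Fin n → ℝ} (hx : Function.Injective x) :
    ∃ τ : Equiv.Perm (Fin n), ∀ i j : Fin n, i < j → x (τ j) < x (τ i) := by
  refine ⟨(Fin.revPerm).trans (Tuple.sort x), fun i j hij => ?_⟩
  have hm := Tuple.monotone_sort x
  have h1 : (Fin.revPerm j : Fin n) < Fin.revPerm i := by
    simpa using Fin.rev_lt_rev.mpr hij
  have h2 : (x ∘ Tuple.sort x) (Fin.revPerm j) ≤ (x ∘ Tuple.sort x) (Fin.revPerm i) :=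
    hm h1.le
  simp only [Equiv.trans_apply]
  refine lt_of_le_of_ne h2 fun h => ?_
  exact absurd (Equiv.injective _ (hx h)) h1.ne

/-- Uniqueness of the strictly-decreasing sorting permutation. -/
theorem aux_sort_unique {n : ℕ} {x : Fin n → ℝ} {τ τ' : Equiv.Perm (Fin n)}
    (h : ∀ i j : Fin n, i < j → x (τ j) < x (τ i))
    (h' : ∀ i j : Fin n, i < j → x (τ' j) < x (τ' i)) : τ = τ' := by
  have hA : StrictAnti (x ∘ τ) := fun i j hij => h i j hij
  set w : Equiv.Perm (Fin n) := τ'.trans τ.symm with hw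
  have hwmono : StrictMono (⇑w) := by
    intro a b hab
    have hx : x (τ' b) < x (τ' a) := h' a b hab
    have hc : ∀ k, x (τ' k) = (x ∘ ⇑τ) (w k) := fun k => by
      simp [hw, Function.comp]
    rw [hc a, hc b] at hx
    exact hA.lt_iff_gt.mp hx
  have hrange : Set.range (⇑w) = Set.range (id : Fin n → Fin n) := by
    rw [Equiv.range_eq_univ, Set.range_id]
  have hwid : ⇑w = id := (StrictMono.range_inj hwmono strictMono_id).1 hrange
  refine Equiv.ext fun k => ?_
  have h1 : τ.symm (τ' k) = k := congrFun hwid k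
  exact ((Equiv.symm_apply_eq τ).1 h1).symm

end aux

/-- Integral Cauchy–Binet / Andréief identity: if `A_{r,c} = ∫_S f_r(x) g_c(x) dx`, then
`det A = ∫_{x₀ > ⋯ > x_{n-1}, x ∈ Sⁿ} det(B(x)) · det(C(x)) dx`, where
`B(x)_{r,i} = f r (x i)` and `C(x)_{i,c} = g c (x i)`. -/
theorem andreief_identity (S : Set ℝ) (hS : MeasurableSet S) (n : ℕ) (hn : 1 ≤ n)
    (f g : Fin n → ℝ → ℝ) (hf : ∀ r, Measurable (f r)) (hg : ∀ c, Measurable (g c))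
    (hfg : ∀ r c, IntegrableOn (fun x => f r x * g c x) S) :
    (Matrix.of fun r c : Fin n => ∫ x in S, f r x * g c x).det =
      ∫ x in {x : Fin n → ℝ | (∀ i, x i ∈ S) ∧ (∀ i j : Fin n, i < j → x j < x i)},
        (Matrix.of fun r i : Fin n => f r (x i)).det *
          (Matrix.of fun i c : Fin n => g c (x i)).det := by
  classical
  set μ : Measure ℝ := volume.restrict S with hμ
  set ν : Measure (Fin n → ℝ) := Measure.pi (fun _ => μ) with hν
  set D : Set (Fin n → ℝ) := {x | ∀ i j : Fin n, i < j → x j < x i} with hD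
  have hDm : MeasurableSet D := by
    have : D = ⋂ (i : Fin n), ⋂ (j : Fin n), ⋂ (_ : i < j), {x : Fin n → ℝ | x j < x i} := by
      ext x; simp [hD]
    rw [this]
    exact MeasurableSet.iInter fun i => MeasurableSet.iInter fun j =>
      MeasurableSet.iInter fun _ =>
        measurableSet_lt (measurable_pi_apply j) (measurable_pi_apply i)
  set H : (Fin n → ℝ) → ℝ :=
    fun x => (Matrix.of fun r i : Fin n => f r (x i)).det * ∏ c, g c (x c) with hH
  -- terms integrability
  have hterm : ∀ σ : Equiv.Perm (Fin n),
      Integrable (fun x : Fin n → ℝ => ∏ c, (f (σ c) (x c) * g c (x c))) ν :=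
    fun σ => aux_integrable_prod μ (fun c => hfg (σ c) c)
  have hHeq : ∀ x, H x = ∑ σ : Equiv.Perm (Fin n),
      ((Equiv.Perm.sign σ : ℤ) : ℝ) * ∏ c, (f (σ c) (x c) * g c (x c)) := by
    intro x
    simp only [hH, Matrix.det_apply', Finset.sum_mul, Matrix.of_apply]
    refine Finset.sum_congr rfl fun σ _ => ?_
    rw [mul_assoc, ← Finset.prod_mul_distrib]
  have hHint : Integrable H ν := by
    have hfun : H = fun x => ∑ σ : Equiv.Perm (Fin n),
        ((Equiv.Perm.sign σ : ℤ) : ℝ) * ∏ c, (f (σ c) (x c) * g c (x c)) := funext hHeq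
    rw [hfun]
    exact integrable_finset_sum _ fun σ _ => (hterm σ).const_mul _
  -- Step A : det A = ∫ H dν
  have stepA : (Matrix.of fun r c : Fin n => ∫ x in S, f r x * g c x).det
      = ∫ x, H x ∂ν := by
    rw [Matrix.det_apply']
    have key : ∀ σ : Equiv.Perm (Fin n),
        ∏ c, (Matrix.of fun r c : Fin n => ∫ x in S, f r x * g c x) (σ c) c
          = ∫ x, ∏ c, (f (σ c) (x c) * g c (x c)) ∂ν := by
      intro σ
      rw [hν, aux_integral_prod μ (fun c x => f (σ c) x * g c x)]
      rfl
    calc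
      ∑ σ : Equiv.Perm (Fin n), ((Equiv.Perm.sign σ : ℤ) : ℝ)
            * ∏ c, (Matrix.of fun r c : Fin n => ∫ x in S, f r x * g c x) (σ c) c
          = ∑ σ : Equiv.Perm (Fin n),
              ∫ x, ((Equiv.Perm.sign σ : ℤ) : ℝ)
                * ∏ c, (f (σ c) (x c) * g c (x c)) ∂ν := by
            refine Finset.sum_congr rfl fun σ _ => ?_
            rw [key σ, integral_const_mul]
      _ = ∫ x, ∑ σ : Equiv.Perm (Fin n),
            ((Equiv.Perm.sign σ : ℤ) : ℝ) * ∏ c, (f (σ c) (x c) * g c (x c)) ∂ν :=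
          (integral_finset_sum _ fun σ _ => (hterm σ).const_mul _).symm
      _ = ∫ x, H x ∂ν :=
          integral_congr_ae (Filter.Eventually.of_forall fun x => (hHeq x).symm)
  -- permutation maps
  have measPres : ∀ τ : Equiv.Perm (Fin n),
      MeasurePreserving (⇑(MeasurableEquiv.piCongrLeft (fun _ : Fin n => ℝ) (τ⁻¹ : Equiv.Perm (Fin n)))) ν ν :=
    fun τ => measurePreserving_piCongrLeft (fun _ : Fin n => μ) (τ⁻¹ : Equiv.Perm (Fin n))
  have hΦ : ∀ τ : Equiv.Perm (Fin n), ∀ x : Fin n → ℝ, ∀ i : Fin n,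
      (MeasurableEquiv.piCongrLeft (fun _ : Fin n => ℝ) (τ⁻¹ : Equiv.Perm (Fin n))) x i
        = x (τ i) := by
    intro τ x i
    have h1 := Equiv.piCongrLeft_apply_apply (fun _ : Fin n => ℝ)
      (τ⁻¹ : Equiv.Perm (Fin n)) x (τ i)
    simp only [show τ⁻¹ (τ i) = i from τ.symm_apply_apply i] at h1
    rw [MeasurableEquiv.coe_piCongrLeft, h1]
  -- the pieces
  set A : Equiv.Perm (Fin n) → Set (Fin n → ℝ) :=
    fun τ => (MeasurableEquiv.piCongrLeft (fun _ : Fin n => ℝ) (τ⁻¹ : Equiv.Perm (Fin n))) ⁻¹' D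
    with hA
  have hAmem : ∀ τ x, x ∈ A τ ↔ ∀ i j : Fin n, i < j → x (τ j) < x (τ i) := by
    intro τ x
    simp only [hA, Set.mem_preimage, hD, Set.mem_setOf_eq]
    constructor
    · intro h i j hij; have := h i j hij; rwa [hΦ, hΦ] at this
    · intro h i j hij; rw [hΦ, hΦ]; exact h i j hij
  have hAm : ∀ τ, MeasurableSet (A τ) := fun τ => (measPres τ).measurable hDm
  have hAdisj : Pairwise (Function.onFun Disjoint A) := by
    intro τ τ' hne
    rw [Function.onFun, Set.disjoint_left]
    intro x hx hx'
    exact hne (aux_sort_unique ((hAmem τ x).mp hx) ((hAmem τ' x).mp hx'))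
  set U : Set (Fin n → ℝ) := ⋃ τ : Equiv.Perm (Fin n), A τ with hU
  have hUm : MeasurableSet U := MeasurableSet.iUnion hAm
  have hUc : ν Uᶜ = 0 := by
    have hsub : Uᶜ ⊆ ⋃ (p : Fin n × Fin n) (_ : p.1 ≠ p.2),
        {x : Fin n → ℝ | x p.1 = x p.2} := by
      intro x hx
      by_contra hcon
      simp only [Set.mem_iUnion, not_exists, Set.mem_setOf_eq] at hcon
      have hinj : Function.Injective x := by
        intro a b hab
        by_contra hne
        exact hcon (a, b) hne hab
      obtain ⟨τ, hτ⟩ := aux_exists_sort hinj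
      exact hx (Set.mem_iUnion.2 ⟨τ, (hAmem τ x).mpr hτ⟩)
    refine measure_mono_null hsub ?_
    refine measure_iUnion_null fun p => measure_iUnion_null fun hp => ?_
    exact aux_diag_null μ hp
  -- Step B : ∫ H = ∑ τ, ∫_{A τ} H
  have stepB : ∫ x, H x ∂ν = ∑ τ : Equiv.Perm (Fin n), ∫ x in A τ, H x ∂ν := by
    rw [← integral_add_compl hUm hHint]
    have h0 : ∫ x in Uᶜ, H x ∂ν = 0 := by
      rw [Measure.restrict_eq_zero.2 hUc, integral_zero_measure]
    rw [h0, add_zero, hU,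
      integral_iUnion_fintype hAm hAdisj fun τ => hHint.integrableOn]
  -- Step C : ∫_{A τ} H = ∫_D (H ∘ (· ∘ τ⁻¹))
  have stepC : ∀ τ : Equiv.Perm (Fin n),
      ∫ x in A τ, H x ∂ν = ∫ y in D, H (fun i => y (τ⁻¹ i)) ∂ν := by
    intro τ
    have hemb := (MeasurableEquiv.piCongrLeft (fun _ : Fin n => ℝ)
      (τ⁻¹ : Equiv.Perm (Fin n))).measurableEmbedding
    have := (measPres τ).setIntegral_preimage_emb hemb
      (fun y => H (fun i => y (τ⁻¹ i))) D
    rw [hA, ← this]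
    refine setIntegral_congr_fun (hAm τ) fun x _ => ?_
    congr 1
    funext i
    rw [hΦ]
    congr 1
    simp
  -- integrability of the composed functions
  have hcompint : ∀ τ : Equiv.Perm (Fin n),
      Integrable (fun y : Fin n → ℝ => H (fun i => y (τ i))) ν := by
    intro τ
    have hemb := (MeasurableEquiv.piCongrLeft (fun _ : Fin n => ℝ)
      (τ⁻¹ : Equiv.Perm (Fin n))).measurableEmbedding
    have h := ((measPres τ).integrable_comp_emb hemb).2 hHint
    have : (H ∘ ⇑(MeasurableEquiv.piCongrLeft (fun _ : Fin n => ℝ)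
        (τ⁻¹ : Equiv.Perm (Fin n))))
        = fun y : Fin n → ℝ => H (fun i => y (τ i)) := by
      funext y
      simp only [Function.comp_apply]
      congr 1
      funext i
      rw [hΦ]
    rwa [this] at h
  -- Step D : reindex and swap
  have stepD : ∑ τ : Equiv.Perm (Fin n), ∫ y in D, H (fun i => y (τ⁻¹ i)) ∂ν
      = ∫ y in D, ∑ τ : Equiv.Perm (Fin n), H (fun i => y (τ i)) ∂ν := by
    have hre : ∑ τ : Equiv.Perm (Fin n), ∫ y in D, H (fun i => y (τ⁻¹ i)) ∂ν
        = ∑ τ : Equiv.Perm (Fin n), ∫ y in D, H (fun i => y (τ i)) ∂ν :=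
      Fintype.sum_equiv (Equiv.inv (Equiv.Perm (Fin n))) _ _ (fun τ => rfl)
    rw [hre]
    exact (integral_finset_sum _ fun τ _ => ((hcompint τ).integrableOn)).symm
  -- pointwise identity
  have hpoint : ∀ y : Fin n → ℝ, ∑ τ : Equiv.Perm (Fin n), H (fun i => y (τ i))
      = (Matrix.of fun r i : Fin n => f r (y i)).det
        * (Matrix.of fun i c : Fin n => g c (y i)).det := by
    intro y
    have hdet : ∀ τ : Equiv.Perm (Fin n),
        (Matrix.of fun r i : Fin n => f r (y (τ i))).det
          = ((Equiv.Perm.sign τ : ℤ) : ℝ)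
            * (Matrix.of fun r i : Fin n => f r (y i)).det := by
      intro τ
      have : (Matrix.of fun r i : Fin n => f r (y (τ i)))
          = (Matrix.of fun r i : Fin n => f r (y i)).submatrix id ⇑τ := rfl
      rw [this, Matrix.det_permute']
    rw [Matrix.det_apply' (Matrix.of fun i c : Fin n => g c (y i)), Finset.mul_sum]
    refine Finset.sum_congr rfl fun τ _ => ?_
    simp only [hH, hdet τ, Matrix.of_apply]
    ring
  -- measure conversion
  have hT : {x : Fin n → ℝ | (∀ i, x i ∈ S) ∧ (∀ i j : Fin n, i < j → x j < x i)}
      = D ∩ Set.univ.pi fun _ => S := by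
    ext x
    simp only [Set.mem_setOf_eq, Set.mem_inter_iff, Set.mem_univ_pi, hD]
    tauto
  have hmeasq : ν.restrict D
      = (volume : Measure (Fin n → ℝ)).restrict
          {x : Fin n → ℝ | (∀ i, x i ∈ S) ∧ (∀ i j : Fin n, i < j → x j < x i)} := by
    rw [hν, hμ, aux_pi_restrict S hS n, Measure.restrict_restrict hDm, hT]
  calc
    (Matrix.of fun r c : Fin n => ∫ x in S, f r x * g c x).det
        = ∫ x, H x ∂ν := stepA
    _ = ∑ τ : Equiv.Perm (Fin n), ∫ x in A τ, H x ∂ν := stepB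
    _ = ∑ τ : Equiv.Perm (Fin n), ∫ y in D, H (fun i => y (τ⁻¹ i)) ∂ν := by
        exact Finset.sum_congr rfl fun τ _ => stepC τ
    _ = ∫ y in D, ∑ τ : Equiv.Perm (Fin n), H (fun i => y (τ i)) ∂ν := stepD
    _ = ∫ y in D, (Matrix.of fun r i : Fin n => f r (y i)).det
          * (Matrix.of fun i c : Fin n => g c (y i)).det ∂ν :=
        setIntegral_congr_fun hDm fun y _ => hpoint y
    _ = ∫ x in {x : Fin n → ℝ | (∀ i, x i ∈ S) ∧ (∀ i j : Fin n, i < j → x j < x i)},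
          (Matrix.of fun r i : Fin n => f r (x i)).det
            * (Matrix.of fun i c : Fin n => g c (x i)).det := by
        rw [hmeasq]
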